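/- arXiv:2603.07407 — 3 statements merged into one kernel-verified Lean document; each statement's English description precedes it below -/
import Mathlib

section
/- Let Γ ⊆ ℝ be a closed ray [x₀, ∞) and let f : Γ → ℂ be continuously differentiable with f ∈ L²(Γ) and with derivative bounded by C = sup_{x ∈ Γ} |f'(x)| < ∞. Then for every t ∈ Γ we have |f(t)| ≤ 3^{1/3} · ‖f‖_{L²(Γ)}^{2/3} · C^{1/3}. -/
open MeasureTheory Set

/-- Landau–Kolmogorov type bound on a ray: if `f` is C¹ on `[x₀, ∞)`, square
integrable there, with derivative bounded by `C`, then
`|f t| ≤ 3^(1/3) ‖f‖_{L²}^(2/3) C^(1/3)`. -/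
theorem stmt_0 (x₀ : ℝ) (f f' : ℝ → ℂ) (C : ℝ)
    (hderiv : ∀ x ∈ Ici x₀, HasDerivWithinAt f (f' x) (Ici x₀) x)
    (hcont : ContinuousOn f' (Ici x₀))
    (hC : ∀ x ∈ Ici x₀, ‖f' x‖ ≤ C)
    (hL2 : IntegrableOn (fun x => ‖f x‖ ^ 2) (Ici x₀)) :
    ∀ t ∈ Ici x₀,
      ‖f t‖ ≤ (3 : ℝ) ^ ((1 : ℝ) / 3) *
        ((∫ x in Ici x₀, ‖f x‖ ^ 2) ^ ((1 : ℝ) / 2)) ^ ((2 : ℝ) / 3) *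
        C ^ ((1 : ℝ) / 3) := by
  intro t ht
  set I := ∫ x in Ici x₀, ‖f x‖ ^ 2 with hI
  have hI0 : 0 ≤ I := hI ▸ setIntegral_nonneg measurableSet_Ici (fun x _ => by positivity)
  clear_value I
  have hC0 : 0 ≤ C := le_trans (norm_nonneg _) (hC x₀ self_mem_Ici)
  set M := ‖f t‖ with hM
  have hMnn : (0:ℝ) ≤ M := hM ▸ norm_nonneg (f t)
  have hRHS : (0:ℝ) ≤ (3:ℝ) ^ ((1:ℝ)/3) * (I ^ ((1:ℝ)/2)) ^ ((2:ℝ)/3) * C ^ ((1:ℝ)/3) :=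
    mul_nonneg (mul_nonneg (Real.rpow_nonneg (by norm_num) _)
      (Real.rpow_nonneg (Real.rpow_nonneg hI0 _) _)) (Real.rpow_nonneg hC0 _)
  rcases hMnn.eq_or_lt with hM0 | hM0
  · rw [← hM0]
    exact hRHS
  -- mean value inequality
  have key : ∀ y ∈ Ici x₀, ‖f y - f t‖ ≤ C * ‖y - t‖ :=
    fun y hy => (convex_Ici x₀).norm_image_sub_le_of_norm_hasDerivWithin_le hderiv hC ht hy
  -- C ≠ 0
  have hCpos : 0 < C := by
    rcases hC0.eq_or_lt with h0 | h; swap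
    · exact h
    exfalso
    have hconst : ∀ y ∈ Ici x₀, f y = f t := by
      intro y hy
      have h1 := key y hy
      rw [← h0, zero_mul] at h1
      exact sub_eq_zero.mp (norm_le_zero_iff.mp (le_antisymm h1 (norm_nonneg _)).le)
    have : IntegrableOn (fun _ : ℝ => M ^ 2) (Ici x₀) :=
      hL2.congr_fun (fun y hy => by show ‖f y‖ ^ 2 = M ^ 2; rw [hconst y hy]) measurableSet_Ici
    rcases ((integrableOn_const_iff).mp this) with h | h
    · exact absurd h (by simp [hM0.ne'])
    · simp [Real.volume_Ici] at h
  set h := M / C with hh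
  have hhpos : 0 < h := div_pos hM0 hCpos
  -- lower bound on f on [t, t+h]
  have hlow : ∀ s ∈ Ioc t (t + h), (M - C * (s - t)) ^ 2 ≤ ‖f s‖ ^ 2 := by
    intro s hs
    have hst : x₀ ≤ s := le_trans ht (le_of_lt hs.1)
    have h1 : M - ‖f s‖ ≤ C * (s - t) := by
      have := key s hst
      have habs : ‖s - t‖ = s - t := by
        rw [Real.norm_eq_abs, abs_of_nonneg (by linarith [hs.1.le])]
      calc M - ‖f s‖ ≤ ‖f s - f t‖ := by
            have := norm_sub_norm_le (f t) (f s)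
            simp only [← hM] at *
            calc M - ‖f s‖ ≤ ‖f t - f s‖ := norm_sub_norm_le _ _
              _ = ‖f s - f t‖ := norm_sub_rev _ _
        _ ≤ C * (s - t) := by rw [habs] at this; exact this
    have h2 : 0 ≤ M - C * (s - t) := by
      have : s - t ≤ h := by linarith [hs.2]
      have : C * (s - t) ≤ C * h := by nlinarith
      rw [hh] at this
      have : C * (M / C) = M := mul_div_cancel₀ M (ne_of_gt hCpos)
      nlinarith [hs.2, hCpos]
    have h3 : M - C * (s - t) ≤ ‖f s‖ := by linarith
    nlinarith [norm_nonneg (f s)]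
  -- compute the model integral
  have hanti : ∀ x ∈ uIcc t (t + h),
      HasDerivAt (fun x => -(M - C*(x - t))^3 / (3*C)) ((M - C*(x-t))^2) x := by
    intro x _
    have hu : HasDerivAt (fun x => M - C*(x - t)) (-C) x := by
      simpa using (((hasDerivAt_id x).sub_const t).const_mul C).const_sub M
    have := ((hu.fun_pow 3).fun_neg).div_const (3*C)
    refine this.congr_deriv ?_
    field_simp [hCpos.ne']
    ring
  have hgint : IntervalIntegrable (fun x => (M - C*(x-t))^2) volume t (t+h) := by
    apply Continuous.intervalIntegrable
    continuity
  have hval : ∫ x in t..(t+h), (M - C*(x-t))^2 = M^3 / (3*C) := by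
    rw [intervalIntegral.integral_eq_sub_of_hasDerivAt hanti hgint]
    have hCh : C * h = M := by rw [hh]; exact mul_div_cancel₀ M (ne_of_gt hCpos)
    rw [show t + h - t = h from by ring, show t - t = 0 from by ring, hCh]
    ring_nf
  -- compare integrals
  have hIoc : Ioc t (t + h) ⊆ Ici x₀ := fun s hs => le_trans ht hs.1.le
  have hfIoc : IntegrableOn (fun x => ‖f x‖ ^ 2) (Ioc t (t+h)) := hL2.mono_set hIoc
  have hgIoc : IntegrableOn (fun x => (M - C*(x-t))^2) (Ioc t (t+h)) :=
    (intervalIntegrable_iff_integrableOn_Ioc_of_le (by linarith)).mp hgint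
  have step1 : M^3/(3*C) ≤ ∫ x in Ioc t (t+h), ‖f x‖ ^ 2 := by
    rw [← hval, intervalIntegral.integral_of_le (by linarith)]
    exact setIntegral_mono_on hgIoc hfIoc measurableSet_Ioc hlow
  have step2 : (∫ x in Ioc t (t+h), ‖f x‖ ^ 2) ≤ I := by
    rw [hI]
    apply setIntegral_mono_set hL2 (Filter.Eventually.of_forall fun x => by positivity)
    exact HasSubset.Subset.eventuallyLE hIoc
  have hcube : M ^ 3 ≤ 3 * I * C := by
    have := step1.trans step2
    rw [div_le_iff₀ (by positivity)] at this
    nlinarith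
  -- cube roots
  have hfin : M ≤ (3 * I * C) ^ ((1:ℝ)/3) := by
    have h1 : M = (M ^ (3:ℕ) : ℝ) ^ ((1:ℝ)/3) := by
      rw [← Real.rpow_natCast M 3, ← Real.rpow_mul hMnn]
      norm_num
    rw [h1]
    exact Real.rpow_le_rpow (by positivity) hcube (by norm_num)
  calc M ≤ (3 * I * C) ^ ((1:ℝ)/3) := hfin
    _ = (3:ℝ) ^ ((1:ℝ)/3) * I ^ ((1:ℝ)/3) * C ^ ((1:ℝ)/3) := by
        rw [Real.mul_rpow (by positivity) hC0, Real.mul_rpow (by norm_num) hI0]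
    _ = (3:ℝ) ^ ((1:ℝ)/3) * (I ^ ((1:ℝ)/2)) ^ ((2:ℝ)/3) * C ^ ((1:ℝ)/3) := by
        rw [← Real.rpow_mul hI0]
        norm_num
end

section
/- For every integer k ≥ 0 and every real R ≥ 1, ∫_{|z| > √(k/π) + R} √(π^k/k!) · |z|^k · e^{−(π/2)|z|²} dz ≤ (2 + 2√k) e^{−πR²/2}, where the integral is over the complex plane with Lebesgue measure. -/
open MeasureTheory Real Filter Set

private lemma tail_int (b a c : ℝ) (hb : 0 < b) :
    ∫ r in Set.Ioi c, (r - a) * Real.exp (-b * (r - a) ^ 2)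
      = Real.exp (-b * (c - a) ^ 2) / (2 * b) := by
  have hd : ∀ x ∈ Set.Ici c,
      HasDerivAt (fun r => -Real.exp (-b * (r - a) ^ 2) / (2 * b))
        ((x - a) * Real.exp (-b * (x - a) ^ 2)) x := by
    intro x _
    have h1 : HasDerivAt (fun r : ℝ => r - a) 1 x := (hasDerivAt_id x).sub_const a
    have h2 : HasDerivAt (fun r : ℝ => (r - a) ^ 2) (2 * (x - a)) x := by
      refine (h1.fun_pow' 2).congr_deriv ?_
      simp [Finset.sum_range_succ]
      ring
    have h3 := (h2.const_mul (-b)).exp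
    have h4 := h3.neg.div_const (2 * b)
    refine h4.congr_deriv ?_
    rw [div_eq_iff (by positivity)]
    ring
  have hint : IntegrableOn (fun x : ℝ => (x - a) * Real.exp (-b * (x - a) ^ 2)) (Set.Ioi c) := by
    have := (integrable_mul_exp_neg_mul_sq hb).comp_sub_right a
    exact this.integrableOn
  have htend : Tendsto (fun r : ℝ => -Real.exp (-b * (r - a) ^ 2) / (2 * b)) atTop (nhds 0) := by
    have h1 : Tendsto (fun r : ℝ => r - a) atTop atTop :=
      tendsto_atTop_add_const_right _ (-a) tendsto_id |>.congr (by intro x; simp; ring)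
    have h2 : Tendsto (fun r : ℝ => (r - a) ^ 2) atTop atTop :=
      (tendsto_pow_atTop two_ne_zero).comp h1
    have h3 : Tendsto (fun r : ℝ => -b * (r - a) ^ 2) atTop atBot :=
      h2.const_mul_atTop_of_neg (by linarith)
    have h4 := (Real.tendsto_exp_atBot.comp h3).neg.div_const (2 * b)
    simpa using h4
  have := integral_Ioi_of_hasDerivAt_of_tendsto' hd hint htend
  rw [this]
  ring

private lemma kk_le_exp (k : ℕ) : ((k : ℝ)) ^ k / k.factorial ≤ Real.exp k := by
  have h1 : ((k : ℝ)) ^ k / k.factorial ≤ ∑ i ∈ Finset.range (k + 1), (k : ℝ) ^ i / i.factorial := by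
    refine Finset.single_le_sum (f := fun i => (k : ℝ) ^ i / i.factorial) (fun i _ => by positivity)
      (Finset.self_mem_range_succ k)
  refine h1.trans ?_
  simpa using Real.sum_le_exp_of_nonneg (x := (k : ℝ)) (by positivity) (k + 1)

private lemma key_pt (k : ℕ) (r : ℝ) (hr : 0 ≤ r) :
    Real.sqrt (π ^ k / k.factorial) * r ^ k
      ≤ Real.exp (Real.sqrt (π * k) * r - k / 2) := by
  rcases Nat.eq_zero_or_pos k with hk | hk
  · subst hk; simp
  set c : ℝ := Real.sqrt (π * k) with hc
  have hkpos : (0 : ℝ) < k := by exact_mod_cast hk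
  have hcsq : c ^ 2 = π * k := Real.sq_sqrt (by positivity)
  have hcpos : 0 < c := Real.sqrt_pos.2 (by positivity)
  -- square both sides
  have hsq : (π ^ k / k.factorial) * (r ^ k) ^ 2 ≤ Real.exp (c * r - k / 2) ^ 2 := by
    have ht : c * r / k ≤ Real.exp (c * r / k - 1) := by
      have := Real.add_one_le_exp (c * r / k - 1)
      linarith
    have ht2 : (c * r / k) ^ (2 * k) ≤ Real.exp (c * r / k - 1) ^ (2 * k) :=
      pow_le_pow_left₀ (by positivity) ht _
    have hA : (c * r) ^ (2 * k) ≤ (k : ℝ) ^ (2 * k) * Real.exp (2 * (c * r) - 2 * k) := by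
      have hexp : Real.exp (c * r / k - 1) ^ (2 * k) = Real.exp (2 * (c * r) - 2 * k) := by
        rw [← Real.exp_nat_mul]
        congr 1
        field_simp
        push_cast
        ring
      have hdiv : (c * r / k) ^ (2 * k) = (c * r) ^ (2 * k) / (k : ℝ) ^ (2 * k) := by
        rw [div_pow]
      rw [hdiv, hexp] at ht2
      rw [div_le_iff₀ (by positivity)] at ht2
      linarith [ht2]
    -- (c*r)^(2k) = (πk)^k * r^(2k)
    have hcr : (c * r) ^ (2 * k) = (π * k) ^ k * (r ^ k) ^ 2 := by
      rw [← hcsq]; ring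
    rw [hcr] at hA
    have hkk : (π * k) ^ k = π ^ k * (k : ℝ) ^ k := mul_pow _ _ _
    have hfac : (0 : ℝ) < k.factorial := by exact_mod_cast k.factorial_pos
    have hkke := kk_le_exp k
    -- from hA : π^k * k^k * (r^k)^2 ≤ k^(2k) * exp(2cr - 2k)
    -- π^k/k! * (r^k)^2 ≤ k^(2k)/(k^k * k!) * exp(2cr-2k) = (k^k/k!) exp(2cr-2k) ≤ exp(k) exp(2cr-2k)
    have h2k : ((k : ℝ)) ^ (2 * k) = (k : ℝ) ^ k * (k : ℝ) ^ k := by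
      rw [two_mul, pow_add]
    have hkpk : (0 : ℝ) < (k : ℝ) ^ k := by positivity
    rw [hkk, h2k] at hA
    have h : π ^ k * (r ^ k) ^ 2 ≤ (k : ℝ) ^ k * Real.exp (2 * (c * r) - 2 * k) := by
      have h' : (k : ℝ) ^ k * (π ^ k * (r ^ k) ^ 2)
          ≤ (k : ℝ) ^ k * ((k : ℝ) ^ k * Real.exp (2 * (c * r) - 2 * k)) := by
        calc (k : ℝ) ^ k * (π ^ k * (r ^ k) ^ 2)
            = π ^ k * (k : ℝ) ^ k * (r ^ k) ^ 2 := by ring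
          _ ≤ (k : ℝ) ^ k * (k : ℝ) ^ k * Real.exp (2 * (c * r) - 2 * k) := hA
          _ = (k : ℝ) ^ k * ((k : ℝ) ^ k * Real.exp (2 * (c * r) - 2 * k)) := by ring
      exact (mul_le_mul_iff_right₀ hkpk).1 h'
    have step1 : π ^ k / k.factorial * (r ^ k) ^ 2
        ≤ (k : ℝ) ^ k / k.factorial * Real.exp (2 * (c * r) - 2 * k) := by
      rw [div_mul_eq_mul_div, div_mul_eq_mul_div, div_le_div_iff₀ hfac hfac]
      exact mul_le_mul_of_nonneg_right h hfac.le
    have step2 : ((k : ℝ)) ^ k / k.factorial * Real.exp (2 * (c * r) - 2 * k)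
        ≤ Real.exp k * Real.exp (2 * (c * r) - 2 * k) :=
      mul_le_mul_of_nonneg_right hkke (Real.exp_nonneg _)
    have step3 : Real.exp (k : ℝ) * Real.exp (2 * (c * r) - 2 * k)
        = Real.exp (c * r - k / 2) ^ 2 := by
      rw [← Real.exp_add, ← Real.exp_nat_mul]
      congr 1
      push_cast
      ring
    calc π ^ k / k.factorial * (r ^ k) ^ 2
        ≤ (k : ℝ) ^ k / k.factorial * Real.exp (2 * (c * r) - 2 * k) := step1
      _ ≤ Real.exp k * Real.exp (2 * (c * r) - 2 * k) := step2
      _ = Real.exp (c * r - k / 2) ^ 2 := step3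
  -- now take square roots
  have hL : Real.sqrt (π ^ k / k.factorial) * r ^ k
      = Real.sqrt (π ^ k / k.factorial * (r ^ k) ^ 2) := by
    rw [Real.sqrt_mul (by positivity), Real.sqrt_sq (by positivity)]
  have hRst : Real.exp (c * r - k / 2) = Real.sqrt (Real.exp (c * r - k / 2) ^ 2) :=
    (Real.sqrt_sq (Real.exp_nonneg _)).symm
  rw [hL, hRst]
  exact Real.sqrt_le_sqrt hsq

open MeasureTheory Real

/-- Gaussian-type tail bound for the Bargmann monomials: for `k ≥ 0`, `R ≥ 1`,
`∫_{|z| > √(k/π)+R} √(π^k/k!) |z|^k e^{-(π/2)|z|²} dz ≤ (2+2√k) e^{-πR²/2}`. -/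
theorem stmt_2 (k : ℕ) (R : ℝ) (hR : 1 ≤ R) :
    (∫ z in {z : ℂ | Real.sqrt (k / π) + R < ‖z‖},
        Real.sqrt (π ^ k / k.factorial) * ‖z‖ ^ k *
          Real.exp (-(π / 2) * ‖z‖ ^ 2)) ≤
      (2 + 2 * Real.sqrt k) * Real.exp (-(π * R ^ 2) / 2) := by
  set a : ℝ := Real.sqrt (k / π) with ha_def
  set C : ℝ := Real.sqrt (π ^ k / k.factorial) with hC_def
  set c0 : ℝ := a + R with hc0_def
  have hπ : (0 : ℝ) < π := Real.pi_pos
  have ha : 0 ≤ a := Real.sqrt_nonneg _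
  have hR0 : (0 : ℝ) < R := lt_of_lt_of_le one_pos hR
  have hc0 : 0 < c0 := by positivity
  have hb : (0 : ℝ) < π / 2 := by positivity
  set g : ℝ → ℝ := fun r => C * r ^ k * Real.exp (-(π / 2) * r ^ 2) with hg_def
  -- Step A: write the set integral as an integral of a radial function
  have hset : {z : ℂ | a + R < ‖z‖} = {z : ℂ | c0 < ‖z‖} := by
    ext z; simp [hc0_def]
  have hS : MeasurableSet {z : ℂ | c0 < ‖z‖} :=
    measurableSet_lt measurable_const measurable_norm
  set f : ℝ → ℝ := Set.indicator (Set.Ioi c0) g with hf_def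
  have hfun : ∀ z : ℂ, Set.indicator {z : ℂ | c0 < ‖z‖} (fun z : ℂ => g ‖z‖) z = f ‖z‖ := by
    intro z
    simp only [hf_def, Set.indicator_apply, Set.mem_setOf_eq, Set.mem_Ioi]
  have h0 : (∫ z in {z : ℂ | c0 < ‖z‖}, g ‖z‖) = ∫ z : ℂ, f ‖z‖ := by
    rw [← integral_indicator hS]
    exact integral_congr_ae (Filter.Eventually.of_forall hfun)
  -- Step B: polar-type formula
  have hpolar : (∫ z : ℂ, f ‖z‖) =
      2 * (π * ∫ y in Set.Ioi (0 : ℝ), y * f y) := by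
    rw [integral_fun_norm_addHaar (volume : Measure ℂ) f]
    have hd : Module.finrank ℝ ℂ = 2 := Complex.finrank_real_complex
    have hvol : (volume (Metric.ball (0 : ℂ) 1)).toReal = π := by
      rw [Complex.volume_ball]
      simp [ENNReal.toReal_mul]
    rw [hd, measureReal_def, hvol]
    norm_num [smul_eq_mul, nsmul_eq_mul]
  -- Step C: the indicator reduces the domain
  have hC1 : (∫ y in Set.Ioi (0 : ℝ), y * f y) = ∫ y in Set.Ioi c0, y * g y := by
    have : ∀ y : ℝ, y * f y = Set.indicator (Set.Ioi c0) (fun y => y * g y) y := by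
      intro y
      by_cases hy : y ∈ Set.Ioi c0
      · simp [hf_def, Set.indicator_of_mem, hy]
      · simp [hf_def, Set.indicator_of_notMem, hy]
    simp_rw [this]
    rw [integral_indicator measurableSet_Ioi, Measure.restrict_restrict measurableSet_Ioi,
      Set.Ioi_inter_Ioi, max_eq_left hc0.le]
  -- pointwise bound on Ioi c0
  have ha2 : π * a ^ 2 = k := by
    rw [ha_def, Real.sq_sqrt (by positivity)]
    field_simp
  have hpa : π * a = Real.sqrt (π * k) := by
    rw [ha_def, ← Real.sqrt_sq hπ.le, ← Real.sqrt_mul (by positivity)]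
    congr 1
    field_simp
    rw [Real.sq_sqrt (by positivity)]
    ring
  have hpt : ∀ y ∈ Set.Ioi c0,
      y * g y ≤ (1 + a / R) * ((y - a) * Real.exp (-(π / 2) * (y - a) ^ 2)) := by
    intro y hy
    have hy' : c0 < y := hy
    have hy0 : 0 < y := lt_trans hc0 hy'
    have h1 : g y ≤ Real.exp (-(π / 2) * (y - a) ^ 2) := by
      have hkey := key_pt k y hy0.le
      have h2 : C * y ^ k * Real.exp (-(π / 2) * y ^ 2)
          ≤ Real.exp (Real.sqrt (π * k) * y - k / 2) * Real.exp (-(π / 2) * y ^ 2) :=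
        mul_le_mul_of_nonneg_right hkey (Real.exp_nonneg _)
      have h3 : Real.exp (Real.sqrt (π * k) * y - k / 2) * Real.exp (-(π / 2) * y ^ 2)
          = Real.exp (-(π / 2) * (y - a) ^ 2) := by
        rw [← Real.exp_add, ← hpa]
        congr 1
        linear_combination (1 / 2 : ℝ) * ha2
      rw [h3] at h2
      exact h2
    have h4 : y ≤ (1 + a / R) * (y - a) := by
      have hya : R ≤ y - a := by rw [hc0_def] at hy'; linarith
      have h5 : a ≤ a * ((y - a) / R) :=
        le_mul_of_one_le_right ha ((one_le_div hR0).2 hya)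
      have h6 : (1 + a / R) * (y - a) = (y - a) + a * ((y - a) / R) := by
        field_simp
      linarith
    calc y * g y ≤ y * Real.exp (-(π / 2) * (y - a) ^ 2) :=
          mul_le_mul_of_nonneg_left h1 hy0.le
      _ ≤ ((1 + a / R) * (y - a)) * Real.exp (-(π / 2) * (y - a) ^ 2) :=
          mul_le_mul_of_nonneg_right h4 (Real.exp_nonneg _)
      _ = (1 + a / R) * ((y - a) * Real.exp (-(π / 2) * (y - a) ^ 2)) := by ring
  -- integrability
  have hint1 : IntegrableOn (fun y : ℝ => y * g y) (Set.Ioi c0) := by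
    have hbase : IntegrableOn (fun y : ℝ => y ^ ((k : ℝ) + 1) * Real.exp (-(π / 2) * y ^ 2))
        (Set.Ioi 0) := by
      refine integrableOn_rpow_mul_exp_neg_mul_sq hb ?_
      have := Nat.cast_nonneg (α := ℝ) k
      linarith
    have hbase2 : IntegrableOn (fun y : ℝ => C * (y ^ (k + 1) * Real.exp (-(π / 2) * y ^ 2)))
        (Set.Ioi 0) := by
      refine IntegrableOn.congr_fun (hbase.const_mul C) ?_ measurableSet_Ioi
      intro y hy
      have hyk : (y : ℝ) ^ ((k : ℝ) + 1) = y ^ (k + 1) := by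
        rw [show ((k : ℝ) + 1) = ((k + 1 : ℕ) : ℝ) by push_cast; ring, Real.rpow_natCast]
      simp only [hyk]
    refine (hbase2.mono_set (Set.Ioi_subset_Ioi hc0.le)).congr_fun ?_ measurableSet_Ioi
    intro y hy
    simp only [hg_def]
    ring
  have hint2 : IntegrableOn
      (fun y : ℝ => (1 + a / R) * ((y - a) * Real.exp (-(π / 2) * (y - a) ^ 2)))
      (Set.Ioi c0) := by
    exact (((integrable_mul_exp_neg_mul_sq hb).comp_sub_right a).integrableOn).const_mul _
  have hmono : (∫ y in Set.Ioi c0, y * g y)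
      ≤ ∫ y in Set.Ioi c0, (1 + a / R) * ((y - a) * Real.exp (-(π / 2) * (y - a) ^ 2)) :=
    setIntegral_mono_on hint1 hint2 measurableSet_Ioi hpt
  -- evaluate the majorant integral
  have hval : (∫ y in Set.Ioi c0, (1 + a / R) * ((y - a) * Real.exp (-(π / 2) * (y - a) ^ 2)))
      = (1 + a / R) * (Real.exp (-(π / 2) * R ^ 2) / π) := by
    rw [integral_const_mul, tail_int (π / 2) a c0 hb]
    have : c0 - a = R := by rw [hc0_def]; ring
    rw [this]
    ring_nf
  -- final combination
  have hfinal : 2 * (π * ((1 + a / R) * (Real.exp (-(π / 2) * R ^ 2) / π)))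
      ≤ (2 + 2 * Real.sqrt k) * Real.exp (-(π * R ^ 2) / 2) := by
    have he : Real.exp (-(π / 2) * R ^ 2) = Real.exp (-(π * R ^ 2) / 2) := by ring_nf
    have haR : a / R ≤ Real.sqrt k := by
      have h1 : a / R ≤ a := div_le_self ha hR
      have h2 : a ≤ Real.sqrt k := by
        rw [ha_def]
        apply Real.sqrt_le_sqrt
        rw [div_le_iff₀ hπ]
        nlinarith [Real.pi_gt_three, Nat.cast_nonneg (α := ℝ) k]
      linarith
    have hsimp : 2 * (π * ((1 + a / R) * (Real.exp (-(π / 2) * R ^ 2) / π)))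
        = (2 + 2 * (a / R)) * Real.exp (-(π / 2) * R ^ 2) := by
      field_simp
    rw [hsimp, he]
    apply mul_le_mul_of_nonneg_right _ (Real.exp_nonneg _)
    linarith
  calc (∫ z in {z : ℂ | a + R < ‖z‖},
        C * ‖z‖ ^ k * Real.exp (-(π / 2) * ‖z‖ ^ 2))
      = ∫ z in {z : ℂ | c0 < ‖z‖}, g ‖z‖ := by
        rw [hset]
    _ = 2 * (π * ∫ y in Set.Ioi c0, y * g y) := by rw [h0, hpolar, hC1]
    _ ≤ 2 * (π * ((1 + a / R) * (Real.exp (-(π / 2) * R ^ 2) / π))) := by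
        rw [← hval]
        have := mul_le_mul_of_nonneg_left hmono hπ.le
        linarith
    _ ≤ (2 + 2 * Real.sqrt k) * Real.exp (-(π * R ^ 2) / 2) := hfinal
end

section
/- For every integer k ≥ 0 and every real number r ≥ 0 with r = √(k/π) + t for some t ≥ 0, one has √(π^k/k!) · r^k · e^{−(π/2) r²} ≤ e^{−π t²/2}. -/
open Real

/-- For `k ≥ 0`, `t ≥ 0` and `r = √(k/π) + t` we have
`√(π^k/k!) r^k e^{-(π/2) r²} ≤ e^{-π t²/2}`. -/
theorem stmt_4 (k : ℕ) (t : ℝ) (ht : 0 ≤ t) (r : ℝ)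
    (hr : r = Real.sqrt (k / π) + t) :
    Real.sqrt (π ^ k / k.factorial) * r ^ k * Real.exp (-(π / 2) * r ^ 2) ≤
      Real.exp (-(π * t ^ 2) / 2) := by
  have hπ : (0:ℝ) < π := Real.pi_pos
  rcases Nat.eq_zero_or_pos k with hk | hk
  · subst hk
    simp only [pow_zero, Nat.factorial_zero, Nat.cast_one, Nat.cast_zero, zero_div,
      Real.sqrt_zero, zero_add] at hr ⊢
    rw [div_one, Real.sqrt_one, one_mul, one_mul, hr]
    apply le_of_eq
    ring_nf
  · set a : ℝ := Real.sqrt (↑k / π) with ha_def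
    have hk0 : (0:ℝ) < k := by exact_mod_cast hk
    have ha : 0 < a := Real.sqrt_pos.2 (by positivity)
    have ha2 : a ^ 2 = k / π := Real.sq_sqrt (by positivity)
    have hka : (k:ℝ) = π * a ^ 2 := by rw [ha2]; field_simp
    have hr0 : 0 < r := by rw [hr]; positivity
    -- main inequality on squared prefactor
    have key : (π ^ k / k.factorial) * (r ^ k) ^ 2 ≤
        Real.exp ((k:ℝ) + 2 * π * a * t) := by
      have hfac : ((k:ℝ)) ^ k / k.factorial ≤ Real.exp k :=
        Real.pow_div_factorial_le_exp (x := (k:ℝ)) hk0.le k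
      have hfac' : π ^ k * (r^2) ^ k / k.factorial
          ≤ Real.exp k * ((π * r^2 / k) ^ k) := by
        have heq : π ^ k * (r^2) ^ k / k.factorial
            = ((k:ℝ)) ^ k / k.factorial * ((π * r^2 / k) ^ k) := by
          field_simp
          rw [div_pow, mul_div_assoc', mul_div_cancel_left₀ _ (pow_ne_zero k hk0.ne')]; ring
        rw [heq]
        exact mul_le_mul_of_nonneg_right hfac (by positivity)
      have hx : π * r ^ 2 / k = (1 + t / a) ^ 2 := by
        rw [hr, hka]
        field_simp
      have hexp1 : (1 + t / a) ≤ Real.exp (t / a) := by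
        have := Real.add_one_le_exp (t / a)
        linarith
      have hta : (k:ℝ) * (t / a) = π * a * t := by
        rw [hka]; field_simp
      have hpow : ((1 + t/a) ^ 2) ^ k ≤ Real.exp (2 * π * a * t) := by
        have h1 : ((1 + t/a) ^ 2) ^ k ≤ (Real.exp (t/a) ^ 2) ^ k := by
          apply pow_le_pow_left₀ (by positivity)
          apply pow_le_pow_left₀ (by positivity) hexp1
        refine h1.trans (le_of_eq ?_)
        rw [← pow_mul, ← Real.exp_nat_mul]
        congr 1
        push_cast
        linear_combination 2 * hta
      calc (π ^ k / k.factorial) * (r ^ k) ^ 2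
          = π ^ k * (r^2) ^ k / k.factorial := by ring
        _ ≤ Real.exp k * ((π * r^2 / k) ^ k) := hfac'
        _ = Real.exp k * (((1 + t/a) ^ 2) ^ k) := by rw [hx]
        _ ≤ Real.exp k * Real.exp (2 * π * a * t) :=
            mul_le_mul_of_nonneg_left hpow (Real.exp_pos _).le
        _ = Real.exp ((k:ℝ) + 2 * π * a * t) := by rw [← Real.exp_add]
    have hsq : Real.sqrt (π ^ k / k.factorial) * r ^ k ≤
        Real.exp (((k:ℝ) + 2 * π * a * t) / 2) := by
      have h1 : Real.sqrt (π ^ k / k.factorial) * r ^ k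
          = Real.sqrt ((π ^ k / k.factorial) * (r ^ k) ^ 2) := by
        rw [Real.sqrt_mul (by positivity), Real.sqrt_sq (by positivity)]
      rw [h1, Real.exp_half]
      exact Real.sqrt_le_sqrt key
    calc Real.sqrt (π ^ k / k.factorial) * r ^ k * Real.exp (-(π / 2) * r ^ 2)
        ≤ Real.exp (((k:ℝ) + 2 * π * a * t) / 2) * Real.exp (-(π / 2) * r ^ 2) := by
          exact mul_le_mul_of_nonneg_right hsq (Real.exp_pos _).le
      _ = Real.exp (((k:ℝ) + 2 * π * a * t) / 2 + -(π / 2) * r ^ 2) := by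
          rw [← Real.exp_add]
      _ ≤ Real.exp (-(π * t ^ 2) / 2) := by
          apply Real.exp_le_exp.2
          rw [hr, hka]
          ring_nf
          nlinarith [sq_nonneg a, sq_nonneg t]
end
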